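/- arXiv:2411.15454 — 3 statements merged into one kernel-verified Lean document; each statement's English description precedes it below -/
import Mathlib

section
/- Let A be an n×n real symmetric matrix, let m be a positive integer, and let z_1,…,z_m be i.i.d. standard Gaussian random vectors in ℝ^n (each with i.i.d. N(0,1) coordinates). Then the Gaussian trace estimator tr_m^G(A) := (1/m)·Σ_{j=1}^m z_jᵀ A z_j satisfies E[tr_m^G(A)] = tr(A) and Var[tr_m^G(A)] = (2/m)·‖A‖_F², where ‖A‖_F is the Frobenius norm of A. -/
set_option linter.unusedSectionVars false
set_option linter.unusedTactic false
set_option maxHeartbeats 1000000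

open MeasureTheory ProbabilityTheory Real Filter Finset
open scoped NNReal ENNReal



noncomputable def gaussDens (x : ℝ) : ℝ := rexp (-(1/2) * x^2)

lemma integrable_pow_mul_gauss (k : ℕ) :
    Integrable (fun x : ℝ => x ^ k * gaussDens x) := by
  have h := integrable_rpow_mul_exp_neg_mul_sq (b := (1/2 : ℝ)) (by norm_num)
    (s := (k : ℝ)) (by exact_mod_cast neg_one_lt_zero.trans_le (Nat.cast_nonneg k))
  simpa [gaussDens, Real.rpow_natCast] using h

lemma gauss_I0 : ∫ x : ℝ, gaussDens x = √(2*π) := by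
  have h := integral_gaussian (1/2 : ℝ)
  rw [show (π / (1/2 : ℝ)) = 2 * π by ring] at h
  simpa [gaussDens] using h

lemma gauss_odd (k : ℕ) : ∫ x : ℝ, x ^ (2*k+1) * gaussDens x = 0 := by
  have h : ∫ x : ℝ, (-x) ^ (2*k+1) * gaussDens (-x) = ∫ x : ℝ, x ^ (2*k+1) * gaussDens x :=
    integral_neg_eq_self (fun x : ℝ => x ^ (2*k+1) * gaussDens x) _
  have h2 : ∀ x : ℝ, (-x) ^ (2*k+1) * gaussDens (-x) = -(x ^ (2*k+1) * gaussDens x) := by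
    intro x
    have : gaussDens (-x) = gaussDens x := by simp [gaussDens]
    rw [this, Odd.neg_pow ⟨k, by ring⟩]
    ring
  simp only [h2, integral_neg] at h
  linarith

lemma gauss_ibp (k : ℕ) :
    ∫ x : ℝ, x ^ (k+2) * gaussDens x = (k+1 : ℝ) * ∫ x : ℝ, x ^ k * gaussDens x := by
  set F : ℝ → ℝ := fun x => -(x ^ (k+1) * gaussDens x) with hF
  set g : ℝ → ℝ := fun x => x ^ (k+2) * gaussDens x - (k+1 : ℝ) * (x ^ k * gaussDens x) with hg
  have hderiv : ∀ x : ℝ, HasDerivAt F (g x) x := by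
    intro x
    have h1 : HasDerivAt (fun x : ℝ => -(1/2) * x^2) (-x) x := by
      have := (hasDerivAt_pow 2 x).const_mul (-(1/2) : ℝ)
      refine this.congr_deriv ?_
      norm_num
      ring
    have h2 : HasDerivAt gaussDens (gaussDens x * (-x)) x := h1.exp
    have h3 := (hasDerivAt_pow (k+1) x).mul h2
    have h4 := h3.neg
    refine h4.congr_deriv ?_
    simp only [hg, gaussDens, Nat.add_sub_cancel, Nat.cast_add, Nat.cast_one]
    ring
  have hgint : Integrable g := by
    exact (integrable_pow_mul_gauss (k+2)).sub ((integrable_pow_mul_gauss k).const_mul _)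
  have htop : Tendsto (fun x : ℝ => x ^ (k+1) * gaussDens x) atTop (nhds 0) := by
    have hlo := rpow_mul_exp_neg_mul_sq_isLittleO_exp_neg (b := (1/2:ℝ)) (by norm_num) ((k:ℝ)+1)
    have heq : ∀ x : ℝ, x ^ ((k:ℝ)+1) * rexp (-(1/2) * x ^ 2) = x ^ (k+1) * gaussDens x := by
      intro x
      rw [show ((k:ℝ)+1) = ((k+1 : ℕ) : ℝ) by push_cast; ring, Real.rpow_natCast]
      rfl
    rw [funext heq] at hlo
    have hexp : Tendsto (fun x : ℝ => rexp (-(1/2) * x)) atTop (nhds 0) := by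
      have h1 : Tendsto (fun x : ℝ => -(1/2) * x) atTop atBot :=
        tendsto_id.const_mul_atTop_of_neg (by norm_num)
      exact Real.tendsto_exp_atBot.comp h1
    simpa using hlo.isBigO.trans_tendsto hexp
  have hFtop : Tendsto F atTop (nhds 0) := by
    simpa using htop.neg
  have hFbot : Tendsto F atBot (nhds 0) := by
    have hcomp : Tendsto (fun x : ℝ => F (-x)) atTop (nhds 0) := by
      have : ∀ x : ℝ, F (-x) = (-1:ℝ)^k * (x ^ (k+1) * gaussDens x) := by
        intro x
        simp only [hF]
        rw [show gaussDens (-x) = gaussDens x from by simp [gaussDens], neg_pow]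
        ring
      rw [funext this]
      simpa using (htop.const_mul ((-1:ℝ)^k))
    have := hcomp.comp tendsto_neg_atBot_atTop
    simpa [Function.comp_def] using this
  have hIic : ∫ x in Set.Iic (0:ℝ), g x = F 0 - 0 := by
    apply MeasureTheory.integral_Iic_of_hasDerivAt_of_tendsto
      (hderiv 0).continuousAt.continuousWithinAt (fun x _ => hderiv x)
      hgint.integrableOn hFbot
  have hIoi : ∫ x in Set.Ioi (0:ℝ), g x = 0 - F 0 := by
    apply MeasureTheory.integral_Ioi_of_hasDerivAt_of_tendsto
      (hderiv 0).continuousAt.continuousWithinAt (fun x _ => hderiv x)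
      hgint.integrableOn hFtop
  have htot : ∫ x : ℝ, g x = 0 := by
    rw [← intervalIntegral.integral_Iic_add_Ioi hgint.integrableOn hgint.integrableOn, hIic, hIoi]
    ring
  have := integral_sub (integrable_pow_mul_gauss (k+2))
    ((integrable_pow_mul_gauss k).const_mul ((k:ℝ)+1))
  simp only [hg] at htot
  rw [integral_sub (integrable_pow_mul_gauss (k+2))
    ((integrable_pow_mul_gauss k).const_mul _), integral_const_mul] at htot
  push_cast
  linarith

lemma gauss_I2 : ∫ x : ℝ, x ^ 2 * gaussDens x = √(2*π) := by
  have := gauss_ibp 0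
  simpa [gauss_I0] using this

lemma gauss_I4 : ∫ x : ℝ, x ^ 4 * gaussDens x = 3 * √(2*π) := by
  have := gauss_ibp 2
  rw [gauss_I2] at this
  norm_num at this
  rw [Real.sqrt_mul (by norm_num : (0:ℝ) ≤ 2)]
  linarith

lemma sqrt_two_pi_pos : (0:ℝ) < √(2*π) := Real.sqrt_pos.mpr (by positivity)

lemma gaussianPDFReal_eq (x : ℝ) :
    gaussianPDFReal 0 1 x = (√(2*π))⁻¹ * gaussDens x := by
  simp only [gaussianPDFReal, gaussDens, NNReal.coe_one, mul_one, sub_zero]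
  congr 1
  ring

lemma gaussianReal_integral_eq (g : ℝ → ℝ) :
    ∫ x, g x ∂(gaussianReal 0 1) = (√(2*π))⁻¹ * ∫ x, g x * gaussDens x := by
  rw [gaussianReal_of_var_ne_zero _ one_ne_zero]
  have hmeas : Measurable fun x => Real.toNNReal (gaussianPDFReal 0 1 x) :=
    (measurable_gaussianPDFReal 0 1).real_toNNReal
  have hpdf : gaussianPDF 0 1 = fun x => ((Real.toNNReal (gaussianPDFReal 0 1 x) : ℝ≥0) : ℝ≥0∞) :=
    rfl
  rw [hpdf, integral_withDensity_eq_integral_smul hmeas, ← integral_const_mul]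
  congr 1
  funext x
  rw [NNReal.smul_def, Real.coe_toNNReal _ (gaussianPDFReal_nonneg 0 1 x), smul_eq_mul,
    gaussianPDFReal_eq]
  ring

lemma integrable_pow_gaussianReal (k : ℕ) :
    Integrable (fun x : ℝ => x ^ k) (gaussianReal 0 1) := by
  rw [gaussianReal_of_var_ne_zero _ one_ne_zero]
  have hmeas : Measurable fun x => Real.toNNReal (gaussianPDFReal 0 1 x) :=
    (measurable_gaussianPDFReal 0 1).real_toNNReal
  have hpdf : gaussianPDF 0 1 = fun x => ((Real.toNNReal (gaussianPDFReal 0 1 x) : ℝ≥0) : ℝ≥0∞) :=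
    rfl
  rw [hpdf]
  apply (integrable_withDensity_iff_integrable_smul hmeas).mpr
  have : (fun x : ℝ => Real.toNNReal (gaussianPDFReal 0 1 x) • (x ^ k))
      = fun x : ℝ => (√(2*π))⁻¹ * (x ^ k * gaussDens x) := by
    funext x
    rw [NNReal.smul_def, Real.coe_toNNReal _ (gaussianPDFReal_nonneg 0 1 x), smul_eq_mul,
      gaussianPDFReal_eq]
    ring
  rw [this]
  exact (integrable_pow_mul_gauss k).const_mul _

lemma gaussianReal_mom1 : ∫ x, x ∂(gaussianReal 0 1) = 0 := by
  rw [gaussianReal_integral_eq]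
  have := gauss_odd 0
  norm_num at this
  simp [this]

lemma gaussianReal_mom2 : ∫ x, x ^ 2 ∂(gaussianReal 0 1) = 1 := by
  rw [gaussianReal_integral_eq, gauss_I2, inv_mul_cancel₀ sqrt_two_pi_pos.ne']

lemma gaussianReal_mom3 : ∫ x, x ^ 3 ∂(gaussianReal 0 1) = 0 := by
  rw [gaussianReal_integral_eq]
  have := gauss_odd 1
  norm_num at this
  simp [this]

lemma gaussianReal_mom4 : ∫ x, x ^ 4 ∂(gaussianReal 0 1) = 3 := by
  rw [gaussianReal_integral_eq, gauss_I4,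
    show (√(2*π))⁻¹ * (3*√(2*π)) = 3 * ((√(2*π))⁻¹ * √(2*π)) by ring,
    inv_mul_cancel₀ sqrt_two_pi_pos.ne', mul_one]

section transfer

variable {Ω : Type*} [MeasurableSpace Ω] {P : Measure Ω} {f : Ω → ℝ}

lemma map_integrable_pow (hf : Measurable f) (hd : Measure.map f P = gaussianReal 0 1) (k : ℕ) :
    Integrable (fun ω => f ω ^ k) P := by
  have h := integrable_pow_gaussianReal k
  rw [← hd] at h
  exact (integrable_map_measure (g := fun x : ℝ => x ^ k)
    ((measurable_id.pow_const k).aestronglyMeasurable) hf.aemeasurable).mp h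

lemma map_integral_pow (hf : Measurable f) (hd : Measure.map f P = gaussianReal 0 1) (k : ℕ) :
    ∫ ω, f ω ^ k ∂P = ∫ x, x ^ k ∂(gaussianReal 0 1) := by
  rw [← hd]
  exact (integral_map (φ := f) hf.aemeasurable
    ((measurable_id.pow_const k).aestronglyMeasurable (μ := Measure.map f P))).symm

lemma map_memℒp4 (hf : Measurable f) (hd : Measure.map f P = gaussianReal 0 1) :
    MemLp f 4 P := by
  have h4 : Integrable (fun ω => ‖f ω‖ ^ ((4:ℝ≥0∞).toReal)) P := by
    have he : (fun ω => ‖f ω‖ ^ ((4:ℝ≥0∞).toReal)) = fun ω => f ω ^ 4 := by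
      funext ω
      rw [show ((4:ℝ≥0∞).toReal) = ((4:ℕ):ℝ) by norm_num, Real.rpow_natCast,
        Real.norm_eq_abs, Even.pow_abs (by decide)]
    rw [he]
    exact map_integrable_pow hf hd 4
  have hiff := memLp_norm_rpow_iff (μ := P) (p := 4) (q := 4) hf.aestronglyMeasurable
    (by norm_num) (by norm_num)
  rw [show (4:ℝ≥0∞)/4 = 1 from ENNReal.div_self (by norm_num) (by norm_num)] at hiff
  exact hiff.mp (memLp_one_iff_integrable.mpr h4)

end transfer

section indep

variable {Ω : Type*} [MeasurableSpace Ω] {P : Measure Ω} [IsProbabilityMeasure P]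
  {ι : Type*} [DecidableEq ι] {X : ι → Ω → ℝ}
  (hm : ∀ i, Measurable (X i))
  (hi : iIndepFun (m := fun _ : ι => (inferInstance : MeasurableSpace ℝ)) X P)
  (hd : ∀ i, Measure.map (X i) P = gaussianReal 0 1)

section basic
include hm hd

lemma gX_int1 (a : ι) : Integrable (X a) P := by
  simpa using map_integrable_pow (hm a) (hd a) 1

lemma gX_E1 (a : ι) : ∫ ω, X a ω ∂P = 0 := by
  have h := map_integral_pow (hm a) (hd a) 1
  simpa [gaussianReal_mom1] using h

lemma gX_E2 (a : ι) : ∫ ω, X a ω * X a ω ∂P = 1 := by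
  have h := map_integral_pow (hm a) (hd a) 2
  rw [gaussianReal_mom2] at h
  simpa [pow_two] using h

lemma gX_E3 (a : ι) : ∫ ω, X a ω * X a ω * X a ω ∂P = 0 := by
  have h := map_integral_pow (hm a) (hd a) 3
  rw [gaussianReal_mom3] at h
  simpa [pow_succ, pow_two] using h

lemma gX_E4 (a : ι) : ∫ ω, (X a ω * X a ω) * (X a ω * X a ω) ∂P = 3 := by
  have h := map_integral_pow (hm a) (hd a) 4
  rw [gaussianReal_mom4] at h
  rw [← h]
  congr 1
  funext ω
  ring

lemma gX_L4 (a : ι) : MemLp (X a) 4 P := map_memℒp4 (hm a) (hd a)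

lemma gX_L2mul (a b : ι) : MemLp (fun ω => X a ω * X b ω) 2 P := by
  have h := (gX_L4 hm hd b).smul (gX_L4 hm hd a)
    (r := 2) (hpqr := ⟨by rw [← two_mul, show (4:ℝ≥0∞) = 2 * 2 by norm_num, ENNReal.mul_inv (by simp) (by simp), ← mul_assoc, ENNReal.mul_inv_cancel (by simp) (by simp), one_mul]⟩)
  exact h

lemma gX_int2 (a b : ι) : Integrable (fun ω => X a ω * X b ω) P :=
  (gX_L2mul hm hd a b).integrable (by norm_num)

lemma gX_int3 (a : ι) : Integrable (fun ω => X a ω * X a ω * X a ω) P := by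
  have h := map_integrable_pow (hm a) (hd a) 3
  exact h.congr (Filter.Eventually.of_forall fun ω => by ring)

lemma gX_int4 (a b c d : ι) :
    Integrable (fun ω => (X a ω * X b ω) * (X c ω * X d ω)) P := by
  have h := (gX_L2mul hm hd c d).smul (gX_L2mul hm hd a b)
    (r := 1) (hpqr := ⟨by rw [ENNReal.inv_two_add_inv_two, inv_one]⟩)
  exact memLp_one_iff_integrable.mp h

end basic

lemma mulE {f g : Ω → ℝ} (h : IndepFun f g P) (hf : Integrable f P) (hg : Integrable g P) :
    ∫ ω, f ω * g ω ∂P = (∫ ω, f ω ∂P) * ∫ ω, g ω ∂P :=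
  h.integral_fun_mul_eq_mul_integral hf.1 hg.1

include hm hi hd

lemma gX_pairE (a b : ι) :
    ∫ ω, X a ω * X b ω ∂P = if a = b then (1:ℝ) else 0 := by
  by_cases h : a = b
  · subst h; rw [if_pos rfl]; exact gX_E2 hm hd a
  · rw [if_neg h, mulE (hi.indepFun h) (gX_int1 hm hd a) (gX_int1 hm hd b),
      gX_E1 hm hd a, zero_mul]

-- square of a times square of b, a ≠ b
lemma gX_sqsq {a b : ι} (hab : a ≠ b) :
    ∫ ω, (X a ω * X a ω) * (X b ω * X b ω) ∂P = 1 := by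
  have hmul : Measurable fun x : ℝ => x * x := measurable_id.mul measurable_id
  have hind : IndepFun (fun ω => X a ω * X a ω) (fun ω => X b ω * X b ω) P :=
    (hi.indepFun hab).comp hmul hmul
  rw [mulE hind (gX_int2 hm hd a a) (gX_int2 hm hd b b), gX_E2 hm hd a, gX_E2 hm hd b]
  norm_num

-- cube of a times b, a ≠ b
lemma gX_cube {a b : ι} (hab : a ≠ b) :
    ∫ ω, (X a ω * X a ω * X a ω) * X b ω ∂P = 0 := by
  have hcube : Measurable fun x : ℝ => x * x * x :=
    (measurable_id.mul measurable_id).mul measurable_id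
  have hind : IndepFun (fun ω => X a ω * X a ω * X a ω) (X b) P :=
    (hi.indepFun hab).comp hcube measurable_id
  rw [mulE hind (gX_int3 hm hd a) (gX_int1 hm hd b), gX_E3 hm hd a, zero_mul]

-- (X b * X c) * (X a)^2 with a ∉ {b, c}
lemma gX_pair_sq {a b c : ι} (hba : b ≠ a) (hca : c ≠ a) :
    ∫ ω, (X b ω * X c ω) * (X a ω * X a ω) ∂P = if b = c then (1:ℝ) else 0 := by
  have hmul : Measurable fun x : ℝ => x * x := measurable_id.mul measurable_id
  have hpair : Measurable fun p : ℝ × ℝ => p.1 * p.2 := measurable_fst.mul measurable_snd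
  have hind : IndepFun (fun ω => X b ω * X c ω) (fun ω => X a ω * X a ω) P :=
    (hi.indepFun_prodMk hm b c a hba hca).comp hpair hmul
  rw [mulE hind (gX_int2 hm hd b c) (gX_int2 hm hd a a), gX_E2 hm hd a, mul_one,
    gX_pairE hm hi hd b c]

-- four distinct
lemma gX_four {a b c d : ι} (hac : a ≠ c) (had : a ≠ d) (hbc : b ≠ c) (hbd : b ≠ d) :
    ∫ ω, (X a ω * X b ω) * (X c ω * X d ω) ∂P
      = (if a = b then (1:ℝ) else 0) * (if c = d then (1:ℝ) else 0) := by
  have hind : IndepFun (fun ω => X a ω * X b ω) (fun ω => X c ω * X d ω) P :=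
    hi.indepFun_mul_mul hm a b c d hac had hbc hbd
  rw [mulE hind (gX_int2 hm hd a b) (gX_int2 hm hd c d), gX_pairE hm hi hd a b,
    gX_pairE hm hi hd c d]


set_option maxHeartbeats 1000000 in
lemma gX_quadE (a b c d : ι) :
    ∫ ω, (X a ω * X b ω) * (X c ω * X d ω) ∂P
      = (if a = b then (1:ℝ) else 0) * (if c = d then (1:ℝ) else 0)
        + (if a = c then (1:ℝ) else 0) * (if b = d then (1:ℝ) else 0)
        + (if a = d then (1:ℝ) else 0) * (if b = c then (1:ℝ) else 0) := by
  by_cases hab : a = b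
  · subst hab
    by_cases hcd : c = d
    · subst hcd
      by_cases hac : a = c
      · subst hac
        rw [gX_E4 hm hd a]
        norm_num
      · rw [gX_sqsq hm hi hd hac]
        simp [hac]
    · by_cases hac : a = c
      · subst hac
        have had : a ≠ d := hcd
        have hre : (fun ω => (X a ω * X a ω) * (X a ω * X d ω))
            = fun ω => (X a ω * X a ω * X a ω) * X d ω := by funext ω; ring
        rw [hre, gX_cube hm hi hd had]
        simp [hcd, had]
      · by_cases had : a = d
        · subst had
          have hre : (fun ω => (X a ω * X a ω) * (X c ω * X a ω))
              = fun ω => (X a ω * X a ω * X a ω) * X c ω := by funext ω; ring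
          rw [hre, gX_cube hm hi hd hac]
          simp [hcd, hac]
        · have hre : (fun ω => (X a ω * X a ω) * (X c ω * X d ω))
              = fun ω => (X c ω * X d ω) * (X a ω * X a ω) := by funext ω; ring
          rw [hre, gX_pair_sq hm hi hd (fun h => hac h.symm) (fun h => had h.symm)]
          simp [hcd, hac, had]
  · by_cases hcd : c = d
    · subst hcd
      by_cases hac : a = c
      · subst hac
        have hre : (fun ω => (X a ω * X b ω) * (X a ω * X a ω))
            = fun ω => (X a ω * X a ω * X a ω) * X b ω := by funext ω; ring
        rw [hre, gX_cube hm hi hd hab]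
        simp [hab, Ne.symm hab]
      · by_cases hbc : b = c
        · subst hbc
          have hre : (fun ω => (X a ω * X b ω) * (X b ω * X b ω))
              = fun ω => (X b ω * X b ω * X b ω) * X a ω := by funext ω; ring
          rw [hre, gX_cube hm hi hd (fun h => hab h.symm)]
          simp [hab, hac]
        · rw [gX_pair_sq hm hi hd hac hbc]
          simp [hab, hac, hbc]
    · by_cases hac : a = c
      · subst hac
        by_cases hbd : b = d
        · subst hbd
          have hre : (fun ω => (X a ω * X b ω) * (X a ω * X b ω))
              = fun ω => (X a ω * X a ω) * (X b ω * X b ω) := by funext ω; ring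
          rw [hre, gX_sqsq hm hi hd hab]
          simp [hab, hcd, Ne.symm hab]
        · have hre : (fun ω => (X a ω * X b ω) * (X a ω * X d ω))
              = fun ω => (X b ω * X d ω) * (X a ω * X a ω) := by funext ω; ring
          rw [hre, gX_pair_sq hm hi hd (fun h => hab h.symm) (fun h => hcd h.symm)]
          simp [hab, hbd, hcd]
      · by_cases had : a = d
        · subst had
          by_cases hbc : b = c
          · subst hbc
            have hre : (fun ω => (X a ω * X b ω) * (X b ω * X a ω))
                = fun ω => (X a ω * X a ω) * (X b ω * X b ω) := by funext ω; ring
            rw [hre, gX_sqsq hm hi hd hab]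
            simp [hab, hac, Ne.symm hab]
          · have hre : (fun ω => (X a ω * X b ω) * (X c ω * X a ω))
                = fun ω => (X b ω * X c ω) * (X a ω * X a ω) := by funext ω; ring
            rw [hre, gX_pair_sq hm hi hd (fun h => hab h.symm) (fun h => hac h.symm)]
            simp [hab, hac, hbc]
        · by_cases hbc : b = c
          · subst hbc
            have hre : (fun ω => (X a ω * X b ω) * (X b ω * X d ω))
                = fun ω => (X a ω * X d ω) * (X b ω * X b ω) := by funext ω; ring
            rw [hre, gX_pair_sq hm hi hd hab (fun h => hcd h.symm)]
            simp [hab, hac, had, hcd]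
          · by_cases hbd : b = d
            · subst hbd
              have hre : (fun ω => (X a ω * X b ω) * (X c ω * X b ω))
                  = fun ω => (X a ω * X c ω) * (X b ω * X b ω) := by funext ω; ring
              rw [hre, gX_pair_sq hm hi hd hab hcd]
              simp [hab, hac, had, hbc]
            · rw [gX_four hm hi hd hac had hbc hbd]
              simp [hab, hac, had, hbc, hbd]

end indep



lemma delta_pair_eq {α β γ : Type*} [DecidableEq α] [DecidableEq β] [DecidableEq γ]
    (t t' : α × β × γ) :
    ((if (t.1, t.2.1) = (t'.1, t'.2.1) then (1:ℝ) else 0) *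
      if (t.1, t.2.2) = (t'.1, t'.2.2) then (1:ℝ) else 0)
      = if t' = t then 1 else 0 := by
  obtain ⟨j, i, k⟩ := t; obtain ⟨j', i', k'⟩ := t'
  simp only [Prod.mk.injEq]
  by_cases h1 : j = j' <;> by_cases h2 : i = i' <;> by_cases h3 : k = k' <;>
    simp [h1, h2, h3, eq_comm]

lemma delta_swap_eq {α β : Type*} [DecidableEq α] [DecidableEq β]
    (t t' : α × β × β) :
    ((if (t.1, t.2.1) = (t'.1, t'.2.2) then (1:ℝ) else 0) *
      if (t.1, t.2.2) = (t'.1, t'.2.1) then (1:ℝ) else 0)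
      = if t' = (t.1, t.2.2, t.2.1) then 1 else 0 := by
  obtain ⟨j, i, k⟩ := t; obtain ⟨j', i', k'⟩ := t'
  simp only [Prod.mk.injEq]
  by_cases h1 : j = j' <;> by_cases h2 : i = k' <;> by_cases h3 : k = i' <;>
    simp [h1, h2, h3, eq_comm]

lemma sum_diag_delta {m n : ℕ} (A : Matrix (Fin n) (Fin n) ℝ) :
    (∑ t : Fin m × Fin n × Fin n,
      A t.2.1 t.2.2 * if (t.1, t.2.1) = (t.1, t.2.2) then (1:ℝ) else 0)
      = (m : ℝ) * A.trace := by
  simp [Fintype.sum_prod_type, Prod.mk.injEq, mul_ite, mul_one, mul_zero,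
    Finset.sum_ite_eq, Matrix.trace, Matrix.diag, Finset.sum_const, Finset.card_univ,
    nsmul_eq_mul]

lemma big_sum_eval {m n : ℕ} (A : Matrix (Fin n) (Fin n) ℝ) (hA : A.IsSymm) :
    (∑ t : Fin m × Fin n × Fin n, ∑ t' : Fin m × Fin n × Fin n,
      A t.2.1 t.2.2 * A t'.2.1 t'.2.2 *
        ((if (t.1, t.2.1) = (t.1, t.2.2) then (1:ℝ) else 0) *
          (if (t'.1, t'.2.1) = (t'.1, t'.2.2) then (1:ℝ) else 0)
        + (if (t.1, t.2.1) = (t'.1, t'.2.1) then (1:ℝ) else 0) *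
          (if (t.1, t.2.2) = (t'.1, t'.2.2) then (1:ℝ) else 0)
        + (if (t.1, t.2.1) = (t'.1, t'.2.2) then (1:ℝ) else 0) *
          (if (t.1, t.2.2) = (t'.1, t'.2.1) then (1:ℝ) else 0)))
      = (m:ℝ)^2 * A.trace^2 + 2*(m:ℝ) * ∑ i, ∑ k, (A i k)^2 := by
  have hsplit : ∀ t t' : Fin m × Fin n × Fin n,
      A t.2.1 t.2.2 * A t'.2.1 t'.2.2 *
        ((if (t.1, t.2.1) = (t.1, t.2.2) then (1:ℝ) else 0) *
          (if (t'.1, t'.2.1) = (t'.1, t'.2.2) then (1:ℝ) else 0)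
        + (if (t.1, t.2.1) = (t'.1, t'.2.1) then (1:ℝ) else 0) *
          (if (t.1, t.2.2) = (t'.1, t'.2.2) then (1:ℝ) else 0)
        + (if (t.1, t.2.1) = (t'.1, t'.2.2) then (1:ℝ) else 0) *
          (if (t.1, t.2.2) = (t'.1, t'.2.1) then (1:ℝ) else 0))
      = (A t.2.1 t.2.2 * if (t.1, t.2.1) = (t.1, t.2.2) then (1:ℝ) else 0) *
          (A t'.2.1 t'.2.2 * if (t'.1, t'.2.1) = (t'.1, t'.2.2) then (1:ℝ) else 0)
        + (A t.2.1 t.2.2 * A t'.2.1 t'.2.2 * if t' = t then (1:ℝ) else 0)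
        + (A t.2.1 t.2.2 * A t'.2.1 t'.2.2 * if t' = (t.1, t.2.2, t.2.1) then (1:ℝ) else 0) := by
    intro t t'
    rw [mul_add, mul_add, delta_pair_eq, delta_swap_eq]
    ring
  simp only [hsplit, Finset.sum_add_distrib]
  have e1 : (∑ t : Fin m × Fin n × Fin n, ∑ t' : Fin m × Fin n × Fin n,
      (A t.2.1 t.2.2 * if (t.1, t.2.1) = (t.1, t.2.2) then (1:ℝ) else 0) *
        (A t'.2.1 t'.2.2 * if (t'.1, t'.2.1) = (t'.1, t'.2.2) then (1:ℝ) else 0))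
      = (m:ℝ)^2 * A.trace^2 := by
    rw [← Finset.sum_mul_sum, sum_diag_delta]
    ring
  have e2 : (∑ t : Fin m × Fin n × Fin n, ∑ t' : Fin m × Fin n × Fin n,
      A t.2.1 t.2.2 * A t'.2.1 t'.2.2 * if t' = t then (1:ℝ) else 0)
      = (m:ℝ) * ∑ i, ∑ k, (A i k)^2 := by
    simp [mul_ite, mul_one, mul_zero, Finset.sum_ite_eq', Fintype.sum_prod_type,
      Finset.sum_const, Finset.card_univ, nsmul_eq_mul, sq]
  have e3 : (∑ t : Fin m × Fin n × Fin n, ∑ t' : Fin m × Fin n × Fin n,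
      A t.2.1 t.2.2 * A t'.2.1 t'.2.2 * if t' = (t.1, t.2.2, t.2.1) then (1:ℝ) else 0)
      = (m:ℝ) * ∑ i, ∑ k, (A i k)^2 := by
    have hsym : ∀ i k : Fin n, A k i = A i k := fun i k => congrFun (congrFun hA i) k
    simp [mul_ite, mul_one, mul_zero, Finset.sum_ite_eq', Fintype.sum_prod_type,
      Finset.sum_const, Finset.card_univ, nsmul_eq_mul, sq]
    exact Or.inl (Finset.sum_congr rfl fun i _ => Finset.sum_congr rfl fun k _ => by
      rw [hsym i k])
  rw [e1, e2, e3]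
  ring

/-- The Gaussian trace estimator `tr_m^G(A) = (1/m) ∑_j z_jᵀ A z_j`. -/
noncomputable def traceEst {n : ℕ} (m : ℕ) (A : Matrix (Fin n) (Fin n) ℝ)
    {Ω : Type*} (z : Fin m → Fin n → Ω → ℝ) (ω : Ω) : ℝ :=
  (1 / (m : ℝ)) * ∑ j : Fin m, ∑ i : Fin n, ∑ k : Fin n, z j i ω * A i k * z j k ω

/-- The Gaussian trace estimator is unbiased and has variance `(2/m)‖A‖_F²`. -/
theorem stmt0 {n m : ℕ} (hm : 0 < m) (A : Matrix (Fin n) (Fin n) ℝ) (hA : A.IsSymm)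
    {Ω : Type*} [MeasurableSpace Ω] (P : Measure Ω) [IsProbabilityMeasure P]
    (z : Fin m → Fin n → Ω → ℝ) (hmeas : ∀ j i, Measurable (z j i))
    (hindep : iIndepFun (m := fun _ : Fin m × Fin n => (inferInstance : MeasurableSpace ℝ))
      (fun p ω => z p.1 p.2 ω) P)
    (hdist : ∀ j i, Measure.map (z j i) P = gaussianReal 0 1) :
    (∫ ω, traceEst m A z ω ∂P) = A.trace ∧
      variance (traceEst m A z) P = (2 / (m : ℝ)) * ∑ i, ∑ k, (A i k) ^ 2 := by
  classical
  have hm0 : ((m:ℝ)) ≠ 0 := Nat.cast_ne_zero.mpr hm.ne'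
  have hXm : ∀ p : Fin m × Fin n, Measurable fun ω => z p.1 p.2 ω := fun p => hmeas p.1 p.2
  have hXd : ∀ p : Fin m × Fin n, Measure.map (fun ω => z p.1 p.2 ω) P = gaussianReal 0 1 :=
    fun p => hdist p.1 p.2
  have pairE : ∀ (j j' : Fin m) (i i' : Fin n),
      ∫ ω, z j i ω * z j' i' ω ∂P = if ((j,i) : Fin m × Fin n) = (j',i') then (1:ℝ) else 0 :=
    fun j j' i i' => gX_pairE hXm hindep hXd (j,i) (j',i')
  have quadE : ∀ (j1 j2 j3 j4 : Fin m) (i1 i2 i3 i4 : Fin n),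
      ∫ ω, (z j1 i1 ω * z j2 i2 ω) * (z j3 i3 ω * z j4 i4 ω) ∂P
        = (if ((j1,i1) : Fin m × Fin n) = (j2,i2) then (1:ℝ) else 0) *
            (if ((j3,i3) : Fin m × Fin n) = (j4,i4) then (1:ℝ) else 0)
          + (if ((j1,i1) : Fin m × Fin n) = (j3,i3) then (1:ℝ) else 0) *
            (if ((j2,i2) : Fin m × Fin n) = (j4,i4) then (1:ℝ) else 0)
          + (if ((j1,i1) : Fin m × Fin n) = (j4,i4) then (1:ℝ) else 0) *
            (if ((j2,i2) : Fin m × Fin n) = (j3,i3) then (1:ℝ) else 0) :=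
    fun j1 j2 j3 j4 i1 i2 i3 i4 => gX_quadE hXm hindep hXd (j1,i1) (j2,i2) (j3,i3) (j4,i4)
  have int2 : ∀ (j j' : Fin m) (i i' : Fin n), Integrable (fun ω => z j i ω * z j' i' ω) P :=
    fun j j' i i' => gX_int2 hXm hXd (j,i) (j',i')
  have int4 : ∀ (j1 j2 j3 j4 : Fin m) (i1 i2 i3 i4 : Fin n),
      Integrable (fun ω => (z j1 i1 ω * z j2 i2 ω) * (z j3 i3 ω * z j4 i4 ω)) P :=
    fun j1 j2 j3 j4 i1 i2 i3 i4 => gX_int4 hXm hXd (j1,i1) (j2,i2) (j3,i3) (j4,i4)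
  have L2mul : ∀ (j j' : Fin m) (i i' : Fin n),
      MemLp (fun ω => z j i ω * z j' i' ω) 2 P :=
    fun j j' i i' => gX_L2mul hXm hXd (j,i) (j',i')
  -- term-level facts
  have term_int : ∀ t : Fin m × Fin n × Fin n,
      Integrable (fun ω => z t.1 t.2.1 ω * A t.2.1 t.2.2 * z t.1 t.2.2 ω) P := fun t =>
    ((int2 t.1 t.1 t.2.1 t.2.2).const_mul (A t.2.1 t.2.2)).congr
      (Eventually.of_forall fun ω => by ring)
  have hEterm : ∀ t : Fin m × Fin n × Fin n,
      ∫ ω, z t.1 t.2.1 ω * A t.2.1 t.2.2 * z t.1 t.2.2 ω ∂P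
        = A t.2.1 t.2.2 * if ((t.1, t.2.1) : Fin m × Fin n) = (t.1, t.2.2) then (1:ℝ) else 0 := by
    intro t
    calc ∫ ω, z t.1 t.2.1 ω * A t.2.1 t.2.2 * z t.1 t.2.2 ω ∂P
        = ∫ ω, A t.2.1 t.2.2 * (z t.1 t.2.1 ω * z t.1 t.2.2 ω) ∂P := by
          congr 1; funext ω; ring
      _ = A t.2.1 t.2.2 * ∫ ω, z t.1 t.2.1 ω * z t.1 t.2.2 ω ∂P := integral_const_mul _ _
      _ = _ := by rw [pairE]
  have hconv : traceEst m A z = fun ω =>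
      (1/(m:ℝ)) * ∑ t : Fin m × Fin n × Fin n, z t.1 t.2.1 ω * A t.2.1 t.2.2 * z t.1 t.2.2 ω := by
    funext ω
    show (1/(m:ℝ)) * (∑ j : Fin m, ∑ i : Fin n, ∑ k : Fin n, z j i ω * A i k * z j k ω) = _
    congr 1
    simp [Fintype.sum_prod_type]
  have hS : (∫ ω, ∑ t : Fin m × Fin n × Fin n,
      z t.1 t.2.1 ω * A t.2.1 t.2.2 * z t.1 t.2.2 ω ∂P) = (m:ℝ) * A.trace := by
    rw [integral_finset_sum _ fun t _ => term_int t,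
      Finset.sum_congr rfl fun t _ => hEterm t]
    exact sum_diag_delta A
  have goal1 : (∫ ω, traceEst m A z ω ∂P) = A.trace := by
    rw [hconv]
    simp only []
    rw [integral_const_mul, hS]
    field_simp
  refine ⟨goal1, ?_⟩
  -- variance
  have memterm : ∀ t : Fin m × Fin n × Fin n,
      MemLp (fun ω => z t.1 t.2.1 ω * A t.2.1 t.2.2 * z t.1 t.2.2 ω) 2 P := fun t =>
    ((L2mul t.1 t.1 t.2.1 t.2.2).const_mul (A t.2.1 t.2.2)).ae_eq
      (Eventually.of_forall fun ω => by ring)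
  have hMem : MemLp (traceEst m A z) 2 P := by
    rw [hconv]
    exact (memLp_finset_sum _ fun t _ => memterm t).const_mul _
  have prod_int : ∀ t t' : Fin m × Fin n × Fin n,
      Integrable (fun ω => (z t.1 t.2.1 ω * A t.2.1 t.2.2 * z t.1 t.2.2 ω) *
        (z t'.1 t'.2.1 ω * A t'.2.1 t'.2.2 * z t'.1 t'.2.2 ω)) P := fun t t' =>
    ((int4 t.1 t.1 t'.1 t'.1 t.2.1 t.2.2 t'.2.1 t'.2.2).const_mul
        (A t.2.1 t.2.2 * A t'.2.1 t'.2.2)).congr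
      (Eventually.of_forall fun ω => by ring)
  have prod_val : ∀ t t' : Fin m × Fin n × Fin n,
      ∫ ω, (z t.1 t.2.1 ω * A t.2.1 t.2.2 * z t.1 t.2.2 ω) *
        (z t'.1 t'.2.1 ω * A t'.2.1 t'.2.2 * z t'.1 t'.2.2 ω) ∂P
      = A t.2.1 t.2.2 * A t'.2.1 t'.2.2 *
        ((if ((t.1, t.2.1) : Fin m × Fin n) = (t.1, t.2.2) then (1:ℝ) else 0) *
          (if ((t'.1, t'.2.1) : Fin m × Fin n) = (t'.1, t'.2.2) then (1:ℝ) else 0)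
        + (if ((t.1, t.2.1) : Fin m × Fin n) = (t'.1, t'.2.1) then (1:ℝ) else 0) *
          (if ((t.1, t.2.2) : Fin m × Fin n) = (t'.1, t'.2.2) then (1:ℝ) else 0)
        + (if ((t.1, t.2.1) : Fin m × Fin n) = (t'.1, t'.2.2) then (1:ℝ) else 0) *
          (if ((t.1, t.2.2) : Fin m × Fin n) = (t'.1, t'.2.1) then (1:ℝ) else 0)) := by
    intro t t'
    calc ∫ ω, (z t.1 t.2.1 ω * A t.2.1 t.2.2 * z t.1 t.2.2 ω) *
          (z t'.1 t'.2.1 ω * A t'.2.1 t'.2.2 * z t'.1 t'.2.2 ω) ∂P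
        = ∫ ω, (A t.2.1 t.2.2 * A t'.2.1 t'.2.2) *
            ((z t.1 t.2.1 ω * z t.1 t.2.2 ω) * (z t'.1 t'.2.1 ω * z t'.1 t'.2.2 ω)) ∂P := by
          congr 1; funext ω; ring
      _ = (A t.2.1 t.2.2 * A t'.2.1 t'.2.2) *
            ∫ ω, (z t.1 t.2.1 ω * z t.1 t.2.2 ω) * (z t'.1 t'.2.1 ω * z t'.1 t'.2.2 ω) ∂P :=
          integral_const_mul _ _
      _ = _ := by rw [quadE]
  have hsq : traceEst m A z ^ 2 = fun ω => (1/(m:ℝ)) * (1/(m:ℝ)) *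
      ∑ t : Fin m × Fin n × Fin n, ∑ t' : Fin m × Fin n × Fin n,
        (z t.1 t.2.1 ω * A t.2.1 t.2.2 * z t.1 t.2.2 ω) *
          (z t'.1 t'.2.1 ω * A t'.2.1 t'.2.2 * z t'.1 t'.2.2 ω) := by
    rw [hconv]
    funext ω
    rw [Pi.pow_apply, sq, mul_mul_mul_comm, Finset.sum_mul_sum]
  have hSS : (∫ ω, ∑ t : Fin m × Fin n × Fin n, ∑ t' : Fin m × Fin n × Fin n,
      (z t.1 t.2.1 ω * A t.2.1 t.2.2 * z t.1 t.2.2 ω) *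
        (z t'.1 t'.2.1 ω * A t'.2.1 t'.2.2 * z t'.1 t'.2.2 ω) ∂P)
      = (m:ℝ)^2 * A.trace^2 + 2*(m:ℝ) * ∑ i, ∑ k, (A i k)^2 := by
    have step1 : ∀ t : Fin m × Fin n × Fin n,
        (∫ ω, ∑ t' : Fin m × Fin n × Fin n,
          (z t.1 t.2.1 ω * A t.2.1 t.2.2 * z t.1 t.2.2 ω) *
            (z t'.1 t'.2.1 ω * A t'.2.1 t'.2.2 * z t'.1 t'.2.2 ω) ∂P)
        = ∑ t' : Fin m × Fin n × Fin n, A t.2.1 t.2.2 * A t'.2.1 t'.2.2 *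
          ((if ((t.1, t.2.1) : Fin m × Fin n) = (t.1, t.2.2) then (1:ℝ) else 0) *
            (if ((t'.1, t'.2.1) : Fin m × Fin n) = (t'.1, t'.2.2) then (1:ℝ) else 0)
          + (if ((t.1, t.2.1) : Fin m × Fin n) = (t'.1, t'.2.1) then (1:ℝ) else 0) *
            (if ((t.1, t.2.2) : Fin m × Fin n) = (t'.1, t'.2.2) then (1:ℝ) else 0)
          + (if ((t.1, t.2.1) : Fin m × Fin n) = (t'.1, t'.2.2) then (1:ℝ) else 0) *
            (if ((t.1, t.2.2) : Fin m × Fin n) = (t'.1, t'.2.1) then (1:ℝ) else 0)) := by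
      intro t
      rw [integral_finset_sum _ fun t' _ => prod_int t t']
      exact Finset.sum_congr rfl fun t' _ => prod_val t t'
    rw [integral_finset_sum _ fun t _ => integrable_finset_sum _ fun t' _ => prod_int t t',
      Finset.sum_congr rfl fun t _ => step1 t]
    exact big_sum_eval A hA
  have hsqint : ∫ ω, (traceEst m A z ^ 2) ω ∂P
      = (1/(m:ℝ)) * (1/(m:ℝ)) * ((m:ℝ)^2 * A.trace^2 + 2*(m:ℝ) * ∑ i, ∑ k, (A i k)^2) := by
    rw [hsq]
    rw [integral_const_mul, hSS]
  rw [variance_eq_sub hMem]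
  rw [show P[traceEst m A z ^ 2] = ∫ ω, (traceEst m A z ^ 2) ω ∂P from rfl]
  rw [hsqint, show P[traceEst m A z] = ∫ ω, traceEst m A z ω ∂P from rfl, goal1]
  field_simp
  ring
end

section
/- Let μ and λ be nonnegative real vectors (padded with zeros to a common length n) with μ ⪯ λ in the majorization order. Then there exists a finite sequence of nonnegative vectors μ ⪯ η_1 ⪯ η_2 ⪯ … ⪯ η_r = λ such that for each i, the consecutive vectors η_i and η_{i+1} differ in at most two coordinates. -/
/-- Weak majorization `a ⪯_w b` for nonnegative vectors over possibly different (finite) index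
types, with implicit zero padding: every partial sum of entries of `a` over a set of size `k`
is dominated by some partial sum of entries of `b` over a set of size at most `k`. -/
def WeakMaj {ι κ : Type*} [Fintype ι] [Fintype κ] (a : ι → ℝ) (b : κ → ℝ) : Prop :=
  ∀ S : Finset ι, ∃ T : Finset κ, T.card ≤ S.card ∧ ∑ i ∈ S, a i ≤ ∑ j ∈ T, b j

/-- Majorization `a ⪯ b` for nonnegative vectors: weak majorization plus equality of sums. -/
def Maj {ι κ : Type*} [Fintype ι] [Fintype κ] (a : ι → ℝ) (b : κ → ℝ) : Prop :=
  WeakMaj a b ∧ ∑ i, a i = ∑ j, b j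

open Classical Finset

namespace Stmt4Aux

variable {n : ℕ}

/-- one valid step of the chain -/
def Step (a b : Fin n → ℝ) : Prop :=
  (∀ i, 0 ≤ a i) ∧ (∀ i, 0 ≤ b i) ∧ Maj a b ∧
    ({i | a i ≠ b i} : Set (Fin n)).ncard ≤ 2

noncomputable def Psum (c : Fin n → ℝ) (k : ℕ) : ℝ :=
  ∑ i : Fin n, if (i : ℕ) < k then c i else 0

lemma psum_succ (c : Fin n → ℝ) (m : ℕ) (hm : m < n) :
    Psum c (m + 1) = Psum c m + c ⟨m, hm⟩ := by
  unfold Psum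
  have h2 : c ⟨m, hm⟩ = ∑ i : Fin n, if i = ⟨m, hm⟩ then c i else 0 := by
    rw [Finset.sum_ite_eq' Finset.univ (⟨m, hm⟩ : Fin n) c]; simp
  rw [h2, ← Finset.sum_add_distrib]
  apply Finset.sum_congr rfl
  intro i _
  by_cases hi : i = (⟨m, hm⟩ : Fin n)
  · subst hi; simp
  · have hne : (i : ℕ) ≠ m := fun hh => hi (Fin.ext hh)
    by_cases h : (i:ℕ) < m
    · simp [h, hi, Nat.lt_succ_of_lt h]
    · have : ¬ ((i:ℕ) < m + 1) := by omega
      simp [h, hi, this]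

lemma psum_of_ge (c : Fin n → ℝ) (k : ℕ) (hk : n ≤ k) :
    Psum c k = ∑ i, c i := by
  unfold Psum
  apply Finset.sum_congr rfl
  intro i _
  simp [lt_of_lt_of_le i.2 hk]

lemma psum_mono (c : Fin n → ℝ) (hc : ∀ i, 0 ≤ c i) {k l : ℕ} (hkl : k ≤ l) :
    Psum c k ≤ Psum c l := by
  unfold Psum
  apply Finset.sum_le_sum
  intro i _
  by_cases h : (i:ℕ) < k
  · simp [h, lt_of_lt_of_le h hkl]
  · by_cases h2 : (i:ℕ) < l <;> simp [h, h2, hc i]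

lemma strictMono_le {m : ℕ} (f : Fin m → Fin n) (hf : StrictMono f) :
    ∀ j : Fin m, (j : ℕ) ≤ (f j : ℕ) := by
  intro j
  obtain ⟨j, hj⟩ := j
  induction j with
  | zero => exact Nat.zero_le _
  | succ d ih =>
      have hd : d < m := Nat.lt_of_succ_lt hj
      have h1 := ih hd
      have h2 : f ⟨d, hd⟩ < f ⟨d + 1, hj⟩ := hf (by simp [Fin.lt_def])
      have h3 := Fin.lt_def.mp h2
      simp only at h1 h3 ⊢
      omega

lemma psum_eq_sum_filter (c : Fin n → ℝ) (k : ℕ) :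
    Psum c k = ∑ i ∈ Finset.univ.filter (fun i : Fin n => (i:ℕ) < k), c i := by
  rw [Finset.sum_filter]; rfl

/-- key: for antitone nonneg c, any sum over a set of card ≤ k is at most the top-k sum -/
lemma sum_le_psum (c : Fin n → ℝ) (hc : ∀ i, 0 ≤ c i) (ha : Antitone c)
    (S : Finset (Fin n)) {k : ℕ} (hS : S.card ≤ k) :
    ∑ i ∈ S, c i ≤ Psum c k := by
  have hmn : S.card ≤ n := by simpa using Finset.card_le_univ S
  set m := S.card with hm
  set e := S.orderIsoOfFin rfl with he
  have h1 : ∑ i ∈ S, c i = ∑ j : Fin m, c (e j) := by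
    rw [← Finset.sum_coe_sort S c]
    rw [← Equiv.sum_comp e.toEquiv (fun x : {x // x ∈ S} => c (x : Fin n))]
    rfl
  have hsm : StrictMono (fun j : Fin m => ((e j : {x // x ∈ S}) : Fin n)) := by
    intro x y hxy
    exact e.strictMono hxy
  have h2 : ∀ j : Fin m, c (e j) ≤ c (Fin.castLE hmn j) := by
    intro j
    apply ha
    rw [Fin.le_def]
    exact strictMono_le _ hsm j
  have h3 : (∑ j : Fin m, c (Fin.castLE hmn j)) = Psum c m := by
    rw [psum_eq_sum_filter]
    apply Finset.sum_bij (fun (j : Fin m) _ => Fin.castLE hmn j)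
    · intro j _; simp
    · intro x _ y _ hxy; exact Fin.castLE_injective hmn hxy
    · intro i hi
      simp only [Finset.mem_filter] at hi
      exact ⟨⟨(i:ℕ), hi.2⟩, Finset.mem_univ _, Fin.ext rfl⟩
    · intro j _; rfl
  calc ∑ i ∈ S, c i = ∑ j : Fin m, c (e j) := h1
    _ ≤ ∑ j : Fin m, c (Fin.castLE hmn j) := Finset.sum_le_sum (fun j _ => h2 j)
    _ = Psum c m := h3
    _ ≤ Psum c k := psum_mono c hc hS

lemma card_filter_lt_le (k : ℕ) :
    (Finset.univ.filter (fun i : Fin n => (i:ℕ) < k)).card ≤ k := by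
  have := Finset.card_le_card_of_injOn (fun i : Fin n => (i : ℕ))
    (t := Finset.range k) (s := Finset.univ.filter (fun i : Fin n => (i:ℕ) < k))
    (by intro a ha; simp at ha ⊢; exact ha)
    (fun x _ y _ h => Fin.ext h)
  simpa using this

lemma ncard_le_two {a b : Fin n → ℝ} {p q : Fin n}
    (h : ∀ i, i ≠ p → i ≠ q → a i = b i) :
    ({i | a i ≠ b i} : Set (Fin n)).ncard ≤ 2 := by
  have hsub : ({i | a i ≠ b i} : Set (Fin n)) ⊆ {p, q} := by
    intro i hi
    by_contra hc
    simp only [Set.mem_insert_iff, Set.mem_singleton_iff, not_or] at hc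
    exact hi (h i hc.1 hc.2)
  calc ({i | a i ≠ b i} : Set (Fin n)).ncard ≤ ({p, q} : Set (Fin n)).ncard :=
        Set.ncard_le_ncard hsub (Set.toFinite _)
    _ ≤ ({q} : Set (Fin n)).ncard + 1 := Set.ncard_insert_le _ _
    _ ≤ 2 := by rw [Set.ncard_singleton]

lemma maj_comp_perm (a : Fin n → ℝ) (σ : Equiv.Perm (Fin n)) : Maj a (a ∘ σ) := by
  constructor
  · intro S
    refine ⟨S.map σ.symm.toEmbedding, by simp, ?_⟩
    rw [Finset.sum_map]
    simp
  · exact (Equiv.sum_comp σ a).symm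

lemma step_swap (a : Fin n → ℝ) (ha : ∀ i, 0 ≤ a i) (x y : Fin n) :
    Step a (a ∘ Equiv.swap x y) := by
  have hnc : ({i | a i ≠ (a ∘ Equiv.swap x y) i} : Set (Fin n)).ncard ≤ 2 := by
    apply ncard_le_two (p := x) (q := y)
    intro i hx hy
    simp [Equiv.swap_apply_of_ne_of_ne hx hy]
  exact ⟨ha, fun i => ha _, maj_comp_perm a _, hnc⟩

lemma step_transfer (a : Fin n → ℝ) (ha : ∀ i, 0 ≤ a i) (p q : Fin n) (hpq : p ≠ q)
    (t : ℝ) (ht : 0 ≤ t) (htq : t ≤ a q) (hqp : a q ≤ a p) :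
    Step a (Function.update (Function.update a p (a p + t)) q (a q - t)) := by
  set b := Function.update (Function.update a p (a p + t)) q (a q - t) with hb
  have hbp : b p = a p + t := by
    rw [hb, Function.update_of_ne hpq, Function.update_self]
  have hbq : b q = a q - t := by rw [hb, Function.update_self]
  have hbo : ∀ i, i ≠ p → i ≠ q → b i = a i := by
    intro i hip hiq
    rw [hb, Function.update_of_ne hiq, Function.update_of_ne hip]
  have hdiff : ∀ i, b i - a i = (if i = p then t else 0) + (if i = q then -t else 0) := by
    intro i
    by_cases hip : i = p
    · subst hip; simp [hbp, if_neg hpq]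
    · by_cases hiq : i = q
      · subst hiq; simp [hbq, hip]
      · simp [hbo i hip hiq, hip, hiq]
  have hsum : ∀ S : Finset (Fin n),
      ∑ i ∈ S, b i = ∑ i ∈ S, a i + (if p ∈ S then t else 0) + (if q ∈ S then -t else 0) := by
    intro S
    have : ∑ i ∈ S, b i = ∑ i ∈ S, (a i + ((if i = p then t else 0) + (if i = q then -t else 0))) := by
      apply Finset.sum_congr rfl
      intro i _
      have := hdiff i
      linarith [hdiff i]
    rw [this, Finset.sum_add_distrib, Finset.sum_add_distrib,
      Finset.sum_ite_eq' S p (fun _ => t), Finset.sum_ite_eq' S q (fun _ => -t)]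
    ring
  have hbnn : ∀ i, 0 ≤ b i := by
    intro i
    by_cases hip : i = p
    · subst hip; rw [hbp]; linarith [ha i]
    · by_cases hiq : i = q
      · subst hiq; rw [hbq]; linarith
      · rw [hbo i hip hiq]; exact ha i
  have hnc : ({i | a i ≠ b i} : Set (Fin n)).ncard ≤ 2 :=
    ncard_le_two (fun i hip hiq => (hbo i hip hiq).symm)
  refine ⟨ha, hbnn, ⟨?_, ?_⟩, hnc⟩
  · intro S
    by_cases hq : q ∈ S
    · by_cases hp : p ∈ S
      · exact ⟨S, le_refl _, by rw [hsum S, if_pos hp, if_pos hq]; ring_nf; exact le_refl _⟩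
      · refine ⟨insert p (S.erase q), ?_, ?_⟩
        · rw [Finset.card_insert_of_notMem (fun hc => hp (Finset.mem_of_mem_erase hc)),
            Finset.card_erase_of_mem hq]
          have : 1 ≤ S.card := Finset.card_pos.mpr ⟨q, hq⟩
          omega
        · have hqni : q ∉ insert p (S.erase q) := by
            simp [Finset.mem_erase, Ne.symm hpq]
          have hpni : p ∉ S.erase q := fun hc => hp (Finset.mem_of_mem_erase hc)
          rw [hsum (insert p (S.erase q)), if_pos (Finset.mem_insert_self p _), if_neg hqni,
            Finset.sum_insert hpni]
          have h1 : ∑ i ∈ S, a i = a q + ∑ i ∈ S.erase q, a i :=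
            (Finset.add_sum_erase S a hq).symm
          linarith
    · refine ⟨S, le_refl _, ?_⟩
      rw [hsum S, if_neg hq]
      by_cases hp : p ∈ S <;> simp [hp] <;> linarith
  · rw [hsum Finset.univ]
    simp

lemma rtg_perm (σ : Equiv.Perm (Fin n)) :
    ∀ a : Fin n → ℝ, (∀ i, 0 ≤ a i) → Relation.ReflTransGen Step a (a ∘ σ) := by
  refine Equiv.Perm.swap_induction_on σ ?_ ?_
  · intro a ha
    have h : a ∘ ⇑(1 : Equiv.Perm (Fin n)) = a := rfl
    rw [h]
  · intro f x y hxy ih a ha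
    have h1 : a ∘ ⇑(Equiv.swap x y * f) = (a ∘ ⇑(Equiv.swap x y)) ∘ ⇑f := by
      funext i; simp [Equiv.Perm.mul_apply]
    rw [h1]
    exact Relation.ReflTransGen.head (step_swap a ha x y) (ih _ (fun i => ha _))

lemma chain_of_rtg {μ b : Fin n → ℝ} (h : Relation.ReflTransGen Step μ b) (hμ : ∀ i, 0 ≤ μ i) :
    ∃ (r : ℕ) (η : Fin (r + 1) → Fin n → ℝ),
      η 0 = μ ∧ η (Fin.last r) = b ∧ (∀ s i, 0 ≤ η s i) ∧
      ∀ s : Fin r, Maj (η s.castSucc) (η s.succ) ∧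
        ({i | η s.castSucc i ≠ η s.succ i} : Set (Fin n)).ncard ≤ 2 := by
  induction h with
  | refl => exact ⟨0, fun _ => μ, rfl, rfl, fun _ i => hμ i, fun s => s.elim0⟩
  | @tail b' c hab hbc ih =>
      obtain ⟨r, η, h0, hlast, hnn, hstep⟩ := ih
      refine ⟨r + 1, Fin.snoc η c, ?_, ?_, ?_, ?_⟩
      · have h0' : (0 : Fin (r + 1 + 1)) = Fin.castSucc (0 : Fin (r + 1)) := by simp
        rw [h0', Fin.snoc_castSucc, h0]
      · rw [Fin.snoc_last]
      · intro s i
        refine Fin.lastCases ?_ ?_ s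
        · rw [Fin.snoc_last]; exact hbc.2.1 i
        · intro s'; rw [Fin.snoc_castSucc]; exact hnn s' i
      · intro s
        refine Fin.lastCases ?_ ?_ s
        · rw [Fin.succ_last, Fin.snoc_castSucc, Fin.snoc_last, hlast]
          exact ⟨hbc.2.2.1, hbc.2.2.2⟩
        · intro s'
          rw [Fin.succ_castSucc, Fin.snoc_castSucc, Fin.snoc_castSucc]
          exact hstep s'

lemma sum_update2 (c : Fin n → ℝ) (p q : Fin n) (hpq : p ≠ q) (u v : ℝ) (S : Finset (Fin n)) :
    ∑ i ∈ S, (Function.update (Function.update c p u) q v) i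
      = ∑ i ∈ S, c i + (if p ∈ S then u - c p else 0) + (if q ∈ S then v - c q else 0) := by
  set b := Function.update (Function.update c p u) q v with hb
  have hbp : b p = u := by rw [hb, Function.update_of_ne hpq, Function.update_self]
  have hbq : b q = v := by rw [hb, Function.update_self]
  have hbo : ∀ i, i ≠ p → i ≠ q → b i = c i := by
    intro i hip hiq
    rw [hb, Function.update_of_ne hiq, Function.update_of_ne hip]
  have : ∑ i ∈ S, b i
      = ∑ i ∈ S, (c i + ((if i = p then u - c p else 0) + (if i = q then v - c q else 0))) := by
    apply Finset.sum_congr rfl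
    intro i _
    by_cases hip : i = p
    · subst hip; rw [hbp]; simp [if_neg hpq]
    · by_cases hiq : i = q
      · subst hiq; rw [hbq]; simp [hip]
      · rw [hbo i hip hiq]; simp [hip, hiq]
  rw [this, Finset.sum_add_distrib, Finset.sum_add_distrib,
    Finset.sum_ite_eq' S p (fun _ => u - c p), Finset.sum_ite_eq' S q (fun _ => v - c q)]
  ring

lemma rtg_sorted (d : ℕ) : ∀ a b : Fin n → ℝ, (∀ i, 0 ≤ a i) → (∀ i, 0 ≤ b i) →
    Antitone a → Antitone b →
    (∀ m, Psum a m ≤ Psum b m) → (∑ i, a i = ∑ i, b i) →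
    (Finset.univ.filter (fun i => a i ≠ b i)).card ≤ d →
    Relation.ReflTransGen Step a b := by
  induction d with
  | zero =>
      intro a b _ _ _ _ _ _ hcard
      have hfe : Finset.univ.filter (fun i => a i ≠ b i) = ∅ :=
        Finset.card_eq_zero.mp (Nat.le_zero.mp hcard)
      have hab : a = b := by
        funext i
        by_contra hc
        have : i ∈ Finset.univ.filter (fun i => a i ≠ b i) := by
          simp [hc]
        rw [hfe] at this
        exact absurd this (Finset.notMem_empty i)
      rw [hab]
  | succ d ih =>
      intro a b hann hbnn haa hba hP htot hcard
      by_cases hab : a = b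
      · rw [hab]
      -- find k : minimal index with b k < a k
      have hKne : (Finset.univ.filter (fun i => b i < a i)).Nonempty := by
        by_contra hc
        rw [Finset.not_nonempty_iff_eq_empty] at hc
        have hle : ∀ i, a i ≤ b i := by
          intro i
          by_contra hlt
          have : i ∈ Finset.univ.filter (fun i => b i < a i) := by
            simp; linarith [not_le.mp hlt]
          rw [hc] at this
          exact absurd this (Finset.notMem_empty i)
        obtain ⟨i0, hi0⟩ : ∃ i, a i ≠ b i := by
          by_contra hc2
          push_neg at hc2
          exact hab (funext hc2)
        have : ∑ i, a i < ∑ i, b i :=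
          Finset.sum_lt_sum (fun i _ => hle i)
            ⟨i0, Finset.mem_univ _, lt_of_le_of_ne (hle i0) hi0⟩
        linarith
      set k := (Finset.univ.filter (fun i => b i < a i)).min' hKne with hkdef
      have hk : b k < a k := by
        have := (Finset.univ.filter (fun i => b i < a i)).min'_mem hKne
        simpa using this
      have hkmin : ∀ i, i < k → a i ≤ b i := by
        intro i hik
        by_contra hlt
        have hmem : i ∈ Finset.univ.filter (fun i => b i < a i) := by
          simp; linarith [not_le.mp hlt]
        exact absurd hik (not_lt.mpr (Finset.min'_le _ i hmem))
      -- find j : maximal index < k with a j < b j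
      have hJne : (Finset.univ.filter (fun i => i < k ∧ a i < b i)).Nonempty := by
        by_contra hc
        rw [Finset.not_nonempty_iff_eq_empty] at hc
        have heqbelow : ∀ i, i < k → a i = b i := by
          intro i hik
          refine le_antisymm (hkmin i hik) ?_
          by_contra hlt
          have : i ∈ Finset.univ.filter (fun i => i < k ∧ a i < b i) := by
            simp [hik]; linarith [not_le.mp hlt]
          rw [hc] at this
          exact absurd this (Finset.notMem_empty i)
        have hkn : (k : ℕ) < n := k.2
        have h1 : Psum a ((k : ℕ) + 1) = Psum a (k : ℕ) + a k := by
          have := psum_succ a (k : ℕ) hkn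
          simpa using this
        have h2 : Psum b ((k : ℕ) + 1) = Psum b (k : ℕ) + b k := by
          have := psum_succ b (k : ℕ) hkn
          simpa using this
        have h3 : Psum a (k : ℕ) = Psum b (k : ℕ) := by
          unfold Psum
          apply Finset.sum_congr rfl
          intro i _
          by_cases hi : (i : ℕ) < (k : ℕ)
          · simp only [if_pos hi]
            exact heqbelow i (Fin.lt_def.mpr hi)
          · simp [hi]
        have := hP ((k : ℕ) + 1)
        rw [h1, h2, h3] at this
        linarith
      set j := (Finset.univ.filter (fun i => i < k ∧ a i < b i)).max' hJne with hjdef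
      have hjmem := (Finset.univ.filter (fun i => i < k ∧ a i < b i)).max'_mem hJne
      have hjmem' : j < k ∧ a j < b j := by
        have := hjmem; rw [Finset.mem_filter] at this; exact this.2
      have hjk : j < k := hjmem'.1
      have hj : a j < b j := hjmem'.2
      have hmid : ∀ i, j < i → i < k → b i = a i := by
        intro i hji hik
        refine le_antisymm ?_ (hkmin i hik)
        by_contra hlt
        have hmem : i ∈ Finset.univ.filter (fun i => i < k ∧ a i < b i) := by
          simp [hik]; linarith [not_le.mp hlt]
        exact absurd hji (not_lt.mpr (Finset.le_max' _ i hmem))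
      set t := min (b j - a j) (a k - b k) with htdef
      have ht : 0 < t := by
        apply lt_min <;> linarith
      have htj : t ≤ b j - a j := min_le_left _ _
      have htk : t ≤ a k - b k := min_le_right _ _
      have hakj : a k ≤ a j := haa hjk.le
      set b' := Function.update (Function.update b k (b k + t)) j (b j - t) with hb'def
      have hjkne : j ≠ k := ne_of_lt hjk
      have hb'j : b' j = b j - t := by rw [hb'def, Function.update_self]
      have hb'k : b' k = b k + t := by
        rw [hb'def, Function.update_of_ne (Ne.symm hjkne), Function.update_self]
      have hb'o : ∀ i, i ≠ j → i ≠ k → b' i = b i := by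
        intro i hij hik
        rw [hb'def, Function.update_of_ne hij, Function.update_of_ne hik]
      have hajb'j : a j ≤ b' j := by rw [hb'j]; linarith
      have hb'kak : b' k ≤ a k := by rw [hb'k]; linarith
      have hb'nn : ∀ i, 0 ≤ b' i := by
        intro i
        by_cases hij : i = j
        · subst hij; linarith [hann j]
        · by_cases hik : i = k
          · subst hik; rw [hb'k]; linarith [hbnn k]
          · rw [hb'o i hij hik]; exact hbnn i
      have hb'a : Antitone b' := by
        intro x y hxy
        rcases eq_or_lt_of_le hxy with heq | hlt
        · rw [heq]
        by_cases hxj : x = j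
        · subst hxj
          by_cases hyk : y = k
          · subst hyk; linarith [hakj]
          · have hjy : j < y := hlt
            rcases lt_or_gt_of_ne hyk with hyk' | hyk'
            · rw [hb'o y (ne_of_gt hjy) hyk, hmid y hjy hyk']
              linarith [haa hjy.le]
            · rw [hb'o y (ne_of_gt hjy) hyk]
              have := hba hyk'.le
              linarith [hbnn k]
        · by_cases hxk : x = k
          · subst hxk
            have hyk : k < y := hlt
            have hyj : y ≠ j := by intro hc; subst hc; exact absurd hjk (not_lt.mpr hyk.le)
            have hynek : y ≠ k := ne_of_gt hyk
            rw [hb'o y hyj hynek, hb'k]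
            have := hba hyk.le
            linarith
          · -- x ∉ {j, k}
            have hbx : b' x = b x := hb'o x hxj hxk
            by_cases hyj : y = j
            · subst hyj
              have hxj' : x < j := lt_of_le_of_ne hxy hxj
              rw [hbx, hb'j]
              have := hba hxj'.le
              linarith
            · by_cases hyk : y = k
              · subst hyk
                have hxk' : x < k := lt_of_le_of_ne hxy hxk
                rw [hbx, hb'k]
                rcases lt_trichotomy x j with hxj' | hxj' | hxj'
                · have := hba hxj'.le
                  linarith [hba hjk.le]
                · exact absurd hxj' hxj
                · rw [hmid x hxj' hxk']
                  linarith [haa hxk'.le]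
              · rw [hbx, hb'o y hyj hyk]
                exact hba hxy
      have hpsb' : ∀ m, Psum b' m
          = Psum b m + (if (k : ℕ) < m then t else 0) + (if (j : ℕ) < m then -t else 0) := by
        intro m
        rw [psum_eq_sum_filter, psum_eq_sum_filter, hb'def,
          sum_update2 b k j (Ne.symm hjkne) (b k + t) (b j - t)]
        have hkm : k ∈ Finset.univ.filter (fun i : Fin n => (i : ℕ) < m) ↔ (k : ℕ) < m := by simp
        have hjm : j ∈ Finset.univ.filter (fun i : Fin n => (i : ℕ) < m) ↔ (j : ℕ) < m := by simp
        by_cases h1 : (k : ℕ) < m <;> by_cases h2 : (j : ℕ) < m <;>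
          simp [h1, h2, hkm, hjm] <;> ring
      have hPb' : ∀ m, Psum a m ≤ Psum b' m := by
        intro m
        rcases le_or_gt m (j : ℕ) with hmj | hmj
        · rw [hpsb' m, if_neg (by omega : ¬ (k : ℕ) < m), if_neg (by omega : ¬ (j : ℕ) < m)]
          simpa using hP m
        · rcases le_or_gt m (k : ℕ) with hmk | hmk
          · rw [hpsb' m, if_neg (by omega : ¬ (k : ℕ) < m), if_pos hmj]
            have key : ∀ m', (j : ℕ) + 1 ≤ m' → m' ≤ (k : ℕ) → t ≤ Psum b m' - Psum a m' := by
              intro m' hm1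
              induction m', hm1 using Nat.le_induction with
              | base =>
                  have hjn : (j : ℕ) < n := j.2
                  have h1 := psum_succ a (j : ℕ) hjn
                  have h2 := psum_succ b (j : ℕ) hjn
                  have h3 : (⟨(j : ℕ), hjn⟩ : Fin n) = j := Fin.ext rfl
                  rw [h3] at h1 h2
                  have := hP (j : ℕ)
                  rw [h1, h2]
                  intro _
                  linarith
              | succ m' hm' ihm =>
                  intro hm'k
                  have hkn : (k : ℕ) < n := k.2
                  have hm'n : m' < n := by omega
                  have h1 := psum_succ a m' hm'n
                  have h2 := psum_succ b m' hm'n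
                  have hmidv : b ⟨m', hm'n⟩ = a ⟨m', hm'n⟩ :=
                    hmid ⟨m', hm'n⟩ (Fin.lt_def.mpr (by simpa using hm'))
                      (Fin.lt_def.mpr (by simpa using hm'k))
                  have hih := ihm (by omega)
                  rw [h1, h2]
                  linarith
            have := key m (by omega) hmk
            linarith
          · rw [hpsb' m, if_pos hmk, if_pos (by omega : (j : ℕ) < m)]
            have := hP m
            linarith
      have htot' : ∑ i, a i = ∑ i, b' i := by
        have h1 : ∑ i, b' i = ∑ i, b i + t + (-t) := by
          rw [hb'def, sum_update2 b k j (Ne.symm hjkne) (b k + t) (b j - t)]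
          simp
        rw [h1]
        linarith [htot]
      have hssub : Finset.univ.filter (fun i => a i ≠ b' i)
          ⊂ Finset.univ.filter (fun i => a i ≠ b i) := by
        constructor
        · intro i hi
          simp only [Finset.mem_filter, Finset.mem_univ, true_and] at hi ⊢
          intro hc
          apply hi
          have hij : i ≠ j := by intro hc2; subst hc2; linarith
          have hik : i ≠ k := by intro hc2; subst hc2; linarith
          rw [hb'o i hij hik, ← hc]
        · intro hsub
          rcases min_cases (b j - a j) (a k - b k) with ⟨hmin, _⟩ | ⟨hmin, _⟩
          · have hjin : j ∈ Finset.univ.filter (fun i => a i ≠ b i) := by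
              simp; linarith
            have := hsub hjin
            simp only [Finset.mem_filter, Finset.mem_univ, true_and] at this
            apply this
            rw [hb'j, htdef, hmin]
            ring
          · have hkin : k ∈ Finset.univ.filter (fun i => a i ≠ b i) := by
              simp; intro hc; linarith
            have := hsub hkin
            simp only [Finset.mem_filter, Finset.mem_univ, true_and] at this
            apply this
            rw [hb'k, htdef, hmin]
            ring
      have hcard' : (Finset.univ.filter (fun i => a i ≠ b' i)).card ≤ d := by
        have := Finset.card_lt_card hssub
        omega
      have hrtg1 : Relation.ReflTransGen Step a b' :=
        ih a b' hann hb'nn haa hb'a hPb' htot' hcard'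
      -- step from b' to b
      have hstep : Step b' b := by
        have hcond1 : t ≤ b' k := by rw [hb'k]; linarith [hbnn k]
        have hcond2 : b' k ≤ b' j := by linarith
        have := step_transfer b' hb'nn j k hjkne t ht.le hcond1 hcond2
        have heq : Function.update (Function.update b' j (b' j + t)) k (b' k - t) = b := by
          funext i
          by_cases hik : i = k
          · subst hik; rw [Function.update_self, hb'k]; ring
          · rw [Function.update_of_ne hik]
            by_cases hij : i = j
            · subst hij; rw [Function.update_self, hb'j]; ring
            · rw [Function.update_of_ne hij]
              exact hb'o i hij hik
        rwa [heq] at this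
      exact hrtg1.tail hstep

end Stmt4Aux

open Stmt4Aux in
/-- If `μ ⪯ λ` (nonnegative vectors), there is a finite chain
`μ = η_0 ⪯ η_1 ⪯ … ⪯ η_r = λ` of nonnegative vectors in which consecutive vectors
differ in at most two coordinates. -/
theorem stmt4 {n : ℕ} (μ lam : Fin n → ℝ) (hμ : ∀ i, 0 ≤ μ i) (hlam : ∀ i, 0 ≤ lam i)
    (h : Maj μ lam) :
    ∃ (r : ℕ) (η : Fin (r + 1) → Fin n → ℝ),
      η 0 = μ ∧ η (Fin.last r) = lam ∧ (∀ s i, 0 ≤ η s i) ∧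
      ∀ s : Fin r,
        Maj (η s.castSucc) (η s.succ) ∧
        ({i | η s.castSucc i ≠ η s.succ i} : Set (Fin n)).ncard ≤ 2 := by

  classical
  set σ := Tuple.sort (fun i => -(μ i)) with hσ
  set τ := Tuple.sort (fun i => -(lam i)) with hτ
  have hμσa : Antitone (μ ∘ σ) := by
    intro x y hxy
    have := Tuple.monotone_sort (fun i => -(μ i)) hxy
    simpa using this
  have hlamτa : Antitone (lam ∘ τ) := by
    intro x y hxy
    have := Tuple.monotone_sort (fun i => -(lam i)) hxy
    simpa using this
  have hμσnn : ∀ i, 0 ≤ (μ ∘ σ) i := fun i => hμ _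
  have hlamτnn : ∀ i, 0 ≤ (lam ∘ τ) i := fun i => hlam _
  -- partial sum domination
  have hP : ∀ m, Psum (μ ∘ σ) m ≤ Psum (lam ∘ τ) m := by
    intro m
    set F := Finset.univ.filter (fun i : Fin n => (i : ℕ) < m) with hF
    have h1 : Psum (μ ∘ σ) m = ∑ i ∈ F.image σ, μ i := by
      rw [psum_eq_sum_filter, Finset.sum_image (fun x _ y _ hxy => σ.injective hxy)]
      rfl
    obtain ⟨T, hTcard, hTle⟩ := h.1 (F.image σ)
    have hFcard : (F.image σ).card = F.card :=
      Finset.card_image_of_injective F σ.injective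
    have hFm : F.card ≤ m := card_filter_lt_le m
    have h2 : ∑ i ∈ T, lam i = ∑ i ∈ T.image τ.symm, (lam ∘ τ) i := by
      rw [Finset.sum_image (fun x _ y _ hxy => τ.symm.injective hxy)]
      apply Finset.sum_congr rfl
      intro i _
      simp
    have h3 : (T.image τ.symm).card ≤ m := by
      rw [Finset.card_image_of_injective T τ.symm.injective]
      omega
    calc Psum (μ ∘ σ) m = ∑ i ∈ F.image σ, μ i := h1
      _ ≤ ∑ i ∈ T, lam i := hTle
      _ = ∑ i ∈ T.image τ.symm, (lam ∘ τ) i := h2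
      _ ≤ Psum (lam ∘ τ) m := sum_le_psum (lam ∘ τ) hlamτnn hlamτa _ h3
  have htot : ∑ i, (μ ∘ σ) i = ∑ i, (lam ∘ τ) i := by
    have h1 : ∑ i, (μ ∘ σ) i = ∑ i, μ i := Equiv.sum_comp σ μ
    have h2 : ∑ i, (lam ∘ τ) i = ∑ i, lam i := Equiv.sum_comp τ lam
    rw [h1, h2]
    exact h.2
  have hrtg1 : Relation.ReflTransGen Step μ (μ ∘ σ) := rtg_perm σ μ hμ
  have hrtg2 : Relation.ReflTransGen Step (μ ∘ σ) (lam ∘ τ) :=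
    rtg_sorted (Finset.univ.filter (fun i => (μ ∘ σ) i ≠ (lam ∘ τ) i)).card
      (μ ∘ σ) (lam ∘ τ) hμσnn hlamτnn hμσa hlamτa hP htot (le_refl _)
  have hrtg3 : Relation.ReflTransGen Step (lam ∘ τ) lam := by
    have := rtg_perm τ.symm (lam ∘ τ) hlamτnn
    have heq : (lam ∘ τ) ∘ ⇑τ.symm = lam := by
      funext i; simp
    rwa [heq] at this
  exact chain_of_rtg ((hrtg1.trans hrtg2).trans hrtg3) hμ
end

section
/- Let 0 < λ ≤ φ and set ρ := φ²/λ². Let x ∈ ℝ^n satisfy |x_i| ≤ λ for all i and Σ_i x_i² = φ². Then x ⪯_F w, where w ∈ ℝ^{⌊ρ⌋+1} is the vector whose first ⌊ρ⌋ entries equal λ and whose last entry equals λ·√(ρ − ⌊ρ⌋) (vectors compared after padding with zeros to a common length). -/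
/-- The ordering `x ⪯_F w`: `(x⁺)² ⪯_w (w⁺)²`, `(w⁻)² ⪯_w (x⁻)²`, and `∑ x_i² = ∑ w_i²`. -/
def MajF {ι κ : Type*} [Fintype ι] [Fintype κ] (a : ι → ℝ) (b : κ → ℝ) : Prop :=
  WeakMaj (fun i => max (a i) 0 ^ 2) (fun j => max (b j) 0 ^ 2) ∧
  WeakMaj (fun j => min (b j) 0 ^ 2) (fun i => min (a i) 0 ^ 2) ∧
  ∑ i, a i ^ 2 = ∑ j, b j ^ 2

/-- Any vector with entries bounded by `λ` in absolute value and sum of squares `φ²` is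
`⪯_F`-majorized by the vector with `⌊ρ⌋` entries equal to `λ` and one entry
`λ√(ρ - ⌊ρ⌋)`, where `ρ = φ²/λ²`. -/
theorem stmt14 {n : ℕ} (lam φ : ℝ) (hlam : 0 < lam) (hlamφ : lam ≤ φ) (x : Fin n → ℝ)
    (hb : ∀ i, |x i| ≤ lam) (hs : ∑ i, x i ^ 2 = φ ^ 2) :
    MajF x (fun i : Fin (⌊φ ^ 2 / lam ^ 2⌋₊ + 1) =>
      if (i : ℕ) < ⌊φ ^ 2 / lam ^ 2⌋₊ then lam
      else lam * Real.sqrt (φ ^ 2 / lam ^ 2 - ⌊φ ^ 2 / lam ^ 2⌋₊)) := by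
  set ρ : ℝ := φ ^ 2 / lam ^ 2 with hρ
  set m : ℕ := ⌊ρ⌋₊ with hm
  have hlam2 : (0:ℝ) < lam ^ 2 := by positivity
  have hρ0 : 0 ≤ ρ := by positivity
  have hfl : (m : ℝ) ≤ ρ := Nat.floor_le hρ0
  have hrm : 0 ≤ ρ - m := by linarith
  -- square of the last entry
  have hlast : (lam * Real.sqrt (ρ - m)) ^ 2 = lam ^ 2 * (ρ - m) := by
    rw [mul_pow, Real.sq_sqrt hrm]
  -- sum of squares of w
  have hsumw : ∑ j : Fin (m + 1),
      (if (j : ℕ) < m then lam else lam * Real.sqrt (ρ - m)) ^ 2 = φ ^ 2 := by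
    rw [Fin.sum_univ_castSucc]
    have h1 : ∀ i : Fin m, ((Fin.castSucc i : Fin (m+1)) : ℕ) < m := fun i => i.isLt
    have h2 : ¬ ((Fin.last m : Fin (m+1)) : ℕ) < m := by simp
    simp only [h2, if_false]
    rw [Finset.sum_congr rfl (fun i _ => by rw [if_pos (h1 i)]), Finset.sum_const,
      Finset.card_univ, Fintype.card_fin, hlast]
    have : (m : ℝ) * lam ^ 2 + lam ^ 2 * (ρ - m) = lam ^ 2 * ρ := by ring
    rw [nsmul_eq_mul, this, hρ, mul_div_cancel₀ _ (ne_of_gt hlam2)]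
  -- each entry of w is nonnegative
  have hwpos : ∀ j : Fin (m + 1),
      0 ≤ (if (j : ℕ) < m then lam else lam * Real.sqrt (ρ - m)) := by
    intro j
    split
    · exact hlam.le
    · positivity
  have hmaxsq : ∀ i, max (x i) 0 ^ 2 ≤ x i ^ 2 := by
    intro i
    rcases le_or_gt (x i) 0 with h | h
    · simp [max_eq_right h]; positivity
    · rw [max_eq_left h.le]
  have hxle : ∀ i, x i ^ 2 ≤ lam ^ 2 := by
    intro i
    have := hb i
    calc x i ^ 2 = |x i| ^ 2 := (sq_abs _).symm
      _ ≤ lam ^ 2 := by nlinarith [abs_nonneg (x i)]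
  refine ⟨?_, ?_, ?_⟩
  · -- first weak majorization
    intro S
    rcases le_or_gt S.card m with hS | hS
    · -- take the first S.card entries (all equal to lam)
      have hSm : S.card ≤ m + 1 := le_trans hS (Nat.le_succ m)
      refine ⟨Finset.univ.map (Fin.castLEEmb hSm), ?_, ?_⟩
      · simp
      · rw [Finset.sum_map]
        have hterm : ∀ i : Fin S.card,
            max (if ((Fin.castLEEmb hSm i : Fin (m+1)) : ℕ) < m then lam
              else lam * Real.sqrt (ρ - m)) 0 ^ 2 = lam ^ 2 := by
          intro i
          have : ((Fin.castLEEmb hSm i : Fin (m+1)) : ℕ) < m :=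
            lt_of_lt_of_le i.isLt hS
          rw [if_pos this, max_eq_left hlam.le]
        calc ∑ i ∈ S, max (x i) 0 ^ 2 ≤ ∑ i ∈ S, lam ^ 2 :=
              Finset.sum_le_sum (fun i _ => le_trans (hmaxsq i) (hxle i))
          _ = S.card * lam ^ 2 := by rw [Finset.sum_const, nsmul_eq_mul]
          _ = ∑ i : Fin S.card, lam ^ 2 := by
              rw [Finset.sum_const, Finset.card_univ, Fintype.card_fin, nsmul_eq_mul]
          _ ≤ _ := by
              apply le_of_eq
              exact Finset.sum_congr rfl (fun i _ => (hterm i).symm)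
    · -- take everything
      refine ⟨Finset.univ, ?_, ?_⟩
      · simpa using hS
      · have h1 : ∑ i ∈ S, max (x i) 0 ^ 2 ≤ ∑ i ∈ S, x i ^ 2 :=
          Finset.sum_le_sum (fun i _ => hmaxsq i)
        have h2 : ∑ i ∈ S, x i ^ 2 ≤ ∑ i, x i ^ 2 :=
          Finset.sum_le_sum_of_subset_of_nonneg (Finset.subset_univ S)
            (fun i _ _ => by positivity)
        have h3 : ∑ j : Fin (m+1),
            max (if (j : ℕ) < m then lam else lam * Real.sqrt (ρ - m)) 0 ^ 2 = φ ^ 2 := by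
          rw [← hsumw]
          exact Finset.sum_congr rfl (fun j _ => by rw [max_eq_left (hwpos j)])
        rw [h3]
        calc ∑ i ∈ S, max (x i) 0 ^ 2 ≤ ∑ i, x i ^ 2 := le_trans h1 h2
          _ = φ ^ 2 := hs
  · -- second weak majorization: all entries of w are nonnegative, so left side is 0
    intro S
    refine ⟨∅, by simp, ?_⟩
    have : ∀ j ∈ S, min (if (j : ℕ) < m then lam else lam * Real.sqrt (ρ - m)) 0 ^ 2 = 0 := by
      intro j _
      rw [min_eq_right (hwpos j)]
      norm_num
    rw [Finset.sum_congr rfl this]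
    simp
  · rw [hs, hsumw]
end
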